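/- Let D be a cut-free and lazy derivation of x₁:σ₁,…,xₙ:σₙ ⊢ M:σ in LEM. Then: (1) M is a linear λ-term in normal form (it contains no discard or copy constructs and no redex); (2) |M| ≤ Σᵢ|σᵢ| + |σ|; (3) |D| = |M| + k, where k is the number of occurrences of ∀ and ♯ in σ₁,…,σₙ,σ. -/

import Mathlib

namespace LEMPaper

/-! ## Types of `LEM` -/

/-- Types of `LEM`: raw syntax `σ ::= α | σ ⊸ τ | ∀α.σ | ♯σ`
(type variables in de Bruijn representation).  The grammar of the paper
(exponential types `σ ::= A | ♯σ`, linear types `A ::= α | σ ⊸ A | ∀α.A`) is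
carved out by the predicates `IsLinear` and `IsExp` below. -/
inductive LTy : Type
  | var : ℕ → LTy
  | arr : LTy → LTy → LTy
  | all : LTy → LTy
  | bang : LTy → LTy
  deriving DecidableEq

namespace LTy

def liftRen (ρ : ℕ → ℕ) : ℕ → ℕ
  | 0 => 0
  | n + 1 => ρ n + 1

def rename (ρ : ℕ → ℕ) : LTy → LTy
  | var n => var (ρ n)
  | arr A B => arr (A.rename ρ) (B.rename ρ)
  | all A => all (A.rename (liftRen ρ))
  | bang A => bang (A.rename ρ)

/-- Shift all free type variables up by one. -/
def shift (A : LTy) : LTy := A.rename Nat.succ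

def liftSub (s : ℕ → LTy) : ℕ → LTy
  | 0 => var 0
  | n + 1 => (s n).shift

def substAll (s : ℕ → LTy) : LTy → LTy
  | var n => s n
  | arr A B => arr (A.substAll s) (B.substAll s)
  | all A => all (A.substAll (liftSub s))
  | bang A => bang (A.substAll s)

/-- `A.instTop B` instantiates the outermost bound type variable of `A` with `B`. -/
def instTop (A B : LTy) : LTy :=
  A.substAll (fun n => match n with | 0 => B | m + 1 => var m)

/-- All free type variables are `< d`. -/
def ClosedAt : LTy → ℕ → Prop
  | var n, d => n < d
  | arr A B, d => A.ClosedAt d ∧ B.ClosedAt d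
  | all A, d => A.ClosedAt (d + 1)
  | bang A, d => A.ClosedAt d

/-- `noForall A true` : `A` has no positive occurrence of `∀`;
`noForall A false` : `A` has no negative occurrence of `∀`. -/
def noForall : LTy → Bool → Prop
  | var _, _ => True
  | arr A B, b => A.noForall (!b) ∧ B.noForall b
  | all A, b => b = false ∧ A.noForall b
  | bang A, b => A.noForall b

/-- A type is *lazy* if it contains no negative occurrences of `∀`. -/
def Lazy (A : LTy) : Prop := A.noForall false

/-- The size (number of nodes of the syntax tree) of a type. -/
def size : LTy → ℕ
  | var _ => 1
  | arr A B => A.size + B.size + 1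
  | all A => A.size + 1
  | bang A => A.size + 1

/-- The number of occurrences of `∀` and `♯` in a type. -/
def qmCount : LTy → ℕ
  | var _ => 0
  | arr A B => A.qmCount + B.qmCount
  | all A => A.qmCount + 1
  | bang A => A.qmCount + 1

end LTy

mutual
  /-- Linear types: `A ::= α | σ ⊸ A | ∀α.A`. -/
  inductive LTy.IsLinear : LTy → Prop
    | var (n : ℕ) : LTy.IsLinear (.var n)
    | arr {σ A : LTy} : LTy.IsExp σ → LTy.IsLinear A → LTy.IsLinear (.arr σ A)
    | all {A : LTy} : LTy.IsLinear A → LTy.IsLinear (.all A)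
  /-- Exponential types: `σ ::= A | ♯σ`, where in `♯σ` the type `σ` must be
  closed and without negative occurrences of `∀`. -/
  inductive LTy.IsExp : LTy → Prop
    | lin {A : LTy} : LTy.IsLinear A → LTy.IsExp A
    | bang {σ : LTy} : LTy.IsExp σ → σ.ClosedAt 0 → σ.noForall false →
        LTy.IsExp (.bang σ)
end

/-- Well-formedness of the modal type `♯σ`: `σ` is an exponential type,
closed and without negative occurrences of `∀`. -/
def LTy.BangOk (σ : LTy) : Prop := σ.IsExp ∧ σ.ClosedAt 0 ∧ σ.noForall false

/-! ## Terms of `LEM` -/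

/-- Terms of `LEM` (Definition 4.2), de Bruijn representation:
`M ::= x | λx.M | M N | discard_σ M in N | copy^V_σ M as x,y in N`.
In `copy σ V S B`, `B` is the body (with two bound variables: `1` for the first
copy-variable and `0` for the second one), `S` the copied term, `V` the value
annotation. -/
inductive LTm : Type
  | var : ℕ → LTm
  | app : LTm → LTm → LTm
  | lam : LTm → LTm
  | discard : LTy → LTm → LTm → LTm
  | copy : LTy → LTm → LTm → LTm → LTm
  deriving DecidableEq

namespace LTm

def liftRen (ρ : ℕ → ℕ) : ℕ → ℕ
  | 0 => 0
  | n + 1 => ρ n + 1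

/-- Renaming of free variables (the closed value annotation of `copy` is untouched). -/
def rename (ρ : ℕ → ℕ) : LTm → LTm
  | var n => var (ρ n)
  | app M N => app (M.rename ρ) (N.rename ρ)
  | lam M => lam (M.rename (liftRen ρ))
  | discard σ M N => discard σ (M.rename ρ) (N.rename ρ)
  | copy σ V S B => copy σ V (S.rename ρ) (B.rename (liftRen (liftRen ρ)))

/-- Shift all free variables up by one. -/
def shift (M : LTm) : LTm := M.rename Nat.succ

def liftSub (s : ℕ → LTm) : ℕ → LTm
  | 0 => var 0
  | n + 1 => (s n).shift

/-- Simultaneous capture-avoiding substitution. -/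
def substAll (s : ℕ → LTm) : LTm → LTm
  | var n => s n
  | app M N => app (M.substAll s) (N.substAll s)
  | lam M => lam (M.substAll (liftSub s))
  | discard σ M N => discard σ (M.substAll s) (N.substAll s)
  | copy σ V S B => copy σ V (S.substAll s) (B.substAll (liftSub (liftSub s)))

/-- Capture-avoiding substitution `M[N/n]`; variables above `n` are decremented. -/
def subst (M : LTm) (n : ℕ) (N : LTm) : LTm :=
  M.substAll (fun m => if m < n then var m else if m = n then N else var (m - 1))

/-- Substitute the term `V` for both bound variables of a `copy`-body. -/
def subst2 (B V : LTm) : LTm :=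
  B.substAll (fun m => match m with | 0 => V | 1 => V | n + 2 => var n)

/-- Number of (free) occurrences of the variable `n` in a term. -/
def countFree : LTm → ℕ → ℕ
  | var m, n => if m = n then 1 else 0
  | app M N, n => M.countFree n + N.countFree n
  | lam M, n => M.countFree (n + 1)
  | discard _ M N, n => M.countFree n + N.countFree n
  | copy _ _ S B, n => S.countFree n + B.countFree (n + 2)

/-- A term is closed when it has no free variables. -/
def ClosedTm (M : LTm) : Prop := ∀ n, M.countFree n = 0

/-- Linearity of `LEM` terms (Definition 4.2): every free variable occurs exactly
once, and all bound variables (of `λ` and of `copy`) occur in their scope. -/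
def LinearTm : LTm → Prop
  | var _ => True
  | app M N => M.LinearTm ∧ N.LinearTm ∧ ∀ n, M.countFree n = 0 ∨ N.countFree n = 0
  | lam M => M.LinearTm ∧ M.countFree 0 = 1
  | discard _ M N => M.LinearTm ∧ N.LinearTm ∧
      ∀ n, M.countFree n = 0 ∨ N.countFree n = 0
  | copy _ _ S B => S.LinearTm ∧ B.LinearTm ∧ B.countFree 0 = 1 ∧ B.countFree 1 = 1 ∧
      ∀ n, S.countFree n = 0 ∨ B.countFree (n + 2) = 0

/-- Purity: the term is an ordinary λ-term (no `discard`/`copy` constructs). -/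
def IsPure : LTm → Prop
  | var _ => True
  | app M N => M.IsPure ∧ N.IsPure
  | lam M => M.IsPure
  | discard _ _ _ => False
  | copy _ _ _ _ => False

/-- The size of a term (Definition 4.2); the value annotation of `copy` counts. -/
def size : LTm → ℕ
  | var _ => 1
  | app M N => M.size + N.size + 1
  | lam M => M.size + 1
  | discard _ M N => M.size + N.size + 1
  | copy _ V S B => S.size + B.size + V.size + 1

end LTm

/-- β-reduction on (pure) terms, used to define β-normality of values. -/
inductive PureStep : LTm → LTm → Prop
  | beta (M N : LTm) : PureStep (.app (.lam M) N) (M.subst 0 N)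
  | appL {M M'} (N : LTm) : PureStep M M' → PureStep (.app M N) (.app M' N)
  | appR (M : LTm) {N N'} : PureStep N N' → PureStep (.app M N) (.app M N')
  | lam {M M'} : PureStep M M' → PureStep (.lam M) (.lam M')

/-- A value is a closed linear λ-term (pure, i.e. `discard`/`copy`-free) in
β-normal form. -/
def IsValue (V : LTm) : Prop :=
  V.IsPure ∧ V.LinearTm ∧ V.ClosedTm ∧ ∀ W, ¬ PureStep V W

/-- The one-step reduction relation `→` on terms of `LEM` (Figures 2 and 3):
β-reduction, discarding and copying of values, and the commuting conversions,
all closed under arbitrary contexts. -/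
inductive Step : LTm → LTm → Prop
  -- Figure 2: reduction rules
  | beta (M N : LTm) : Step (.app (.lam M) N) (M.subst 0 N)
  | discardV {V : LTm} (σ : LTy) (M : LTm) :
      IsValue V → Step (.discard σ V M) M
  | copyV {V : LTm} (σ : LTy) (U B : LTm) :
      IsValue V → Step (.copy σ U V B) (B.subst2 V)
  -- Figure 3: commuting conversions
  | discardApp (σ : LTy) (M N P : LTm) :
      Step (.app (.discard σ M N) P) (.discard σ M (.app N P))
  | discardDiscard (σ τ : LTy) (M N P : LTm) :
      Step (.discard σ (.discard τ M N) P) (.discard τ M (.discard σ N P))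
  | copyDiscard (σ τ : LTy) (V M N B : LTm) :
      Step (.copy σ V (.discard τ M N) B) (.discard τ M (.copy σ V N B))
  | copyApp (σ : LTy) (V M B P : LTm) :
      Step (.app (.copy σ V M B) P) (.copy σ V M (.app B (P.rename (· + 2))))
  | discardCopy (σ τ : LTy) (V M N P : LTm) :
      Step (.discard σ (.copy τ V M N) P)
           (.copy τ V M (.discard σ N (P.rename (· + 2))))
  | copyCopy (σ τ : LTy) (U V M N P : LTm) :
      Step (.copy σ U (.copy τ V M N) P)
           (.copy τ V M (.copy σ U N (P.rename (fun n => if n < 2 then n else n + 2))))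
  -- contextual closure
  | appL {M M'} (N : LTm) : Step M M' → Step (.app M N) (.app M' N)
  | appR (M : LTm) {N N'} : Step N N' → Step (.app M N) (.app M N')
  | lamC {M M'} : Step M M' → Step (.lam M) (.lam M')
  | discardL (σ : LTy) {M M'} (N : LTm) : Step M M' → Step (.discard σ M N) (.discard σ M' N)
  | discardR (σ : LTy) (M : LTm) {N N'} : Step N N' → Step (.discard σ M N) (.discard σ M N')
  | copyS (σ : LTy) (V : LTm) {S S'} (B : LTm) : Step S S' → Step (.copy σ V S B) (.copy σ V S' B)
  | copyB (σ : LTy) (V S : LTm) {B B'} : Step B B' → Step (.copy σ V S B) (.copy σ V S B')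

/-! ## The sequent calculus `LEM` -/

/-- The renaming swapping the de Bruijn variables `k` and `k+1`. -/
def swapVar (k : ℕ) (n : ℕ) : ℕ :=
  if n = k then k + 1 else if n = k + 1 then k else n

/-- Term produced by the `cut` rule: substitute `N` (whose variables point into the
first `g` positions) for the variable `0` of `M`, re-addressing the remaining
variables of `M`. -/
def cutTm (g : ℕ) (N M : LTm) : LTm :=
  M.substAll (fun n => match n with
    | 0 => N
    | m + 1 => .var (g + m))

/-- Term produced by the `⊸L` rule: `M[yN/x]`, with the new variable `y` at
position `0`. -/
def arrLTm (g : ℕ) (N M : LTm) : LTm :=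
  M.substAll (fun n => match n with
    | 0 => .app (.var 0) N.shift
    | m + 1 => .var (g + 1 + m))

/-- The type-assignment system `LEM` (Figure 5), as a sequent calculus with
contexts rendered as lists; the implicit exchange of multiset contexts is
rendered by the structural rule `exch` (which is invisible in the paper and
contributes no size).  The rules `prom` (p), `der` (d), `weak` (w) and
`contr` (c) handle the modality `♯`. -/
inductive Der : List LTy → LTm → LTy → Type
  | ax {A : LTy} : A.IsLinear → Der [A] (.var 0) A
  | exch (Γ₁ : List LTy) {σ τ : LTy} {Γ₂ : List LTy} {M : LTm} {C : LTy} :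
      Der (Γ₁ ++ σ :: τ :: Γ₂) M C →
      Der (Γ₁ ++ τ :: σ :: Γ₂) (M.rename (swapVar Γ₁.length)) C
  | cut (Γ : List LTy) {Δ : List LTy} {N M : LTm} {σ τ : LTy} :
      Der Γ N σ → Der (σ :: Δ) M τ →
      Der (Γ ++ Δ) (cutTm Γ.length N M) τ
  | arrR {Γ : List LTy} {M : LTm} {σ B : LTy} :
      B.IsLinear → Der (σ :: Γ) M B → Der Γ (.lam M) (σ.arr B)
  | arrL (Γ : List LTy) {Δ : List LTy} {N M : LTm} {σ B τ : LTy} :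
      B.IsLinear → Der Γ N σ → Der (B :: Δ) M τ →
      Der ((σ.arr B) :: (Γ ++ Δ)) (arrLTm Γ.length N M) τ
  | allR {Γ : List LTy} {M : LTm} {A : LTy} :
      A.IsLinear → Der (Γ.map LTy.shift) M A → Der Γ M (.all A)
  | allL {Γ : List LTy} {M : LTm} {A τ : LTy} (B : LTy) :
      B.IsLinear → Der ((A.instTop B) :: Γ) M τ → Der ((.all A) :: Γ) M τ
  | prom {Γ : List LTy} {M : LTm} {σ : LTy} :
      σ.BangOk → (∀ τ ∈ Γ, ∃ ρ, τ = LTy.bang ρ) → Der Γ M σ → Der Γ M (.bang σ)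
  | der {Γ : List LTy} {M : LTm} {σ τ : LTy} :
      σ.BangOk → Der (σ :: Γ) M τ → Der ((.bang σ) :: Γ) M τ
  | weak {Γ : List LTy} {M : LTm} {σ τ : LTy} :
      σ.BangOk → Der Γ M τ →
      Der ((.bang σ) :: Γ) (.discard σ (.var 0) M.shift) τ
  | contr {Γ : List LTy} {M V : LTm} {σ τ : LTy} :
      σ.BangOk → IsValue V →
      Der ((.bang σ) :: (.bang σ) :: Γ) M τ → Der [] V σ →
      Der ((.bang σ) :: Γ)
        (.copy σ V (.var 0) (M.rename (fun n => if n < 2 then n else n + 1))) τ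

/-- A judgment `x₁:σ₁,…,xₙ:σₙ ⊢ M : τ` is *lazy* when `τ` has no negative
occurrence of `∀` and the `σᵢ` have no positive occurrence of `∀`. -/
def LazyJudg (Γ : List LTy) (τ : LTy) : Prop :=
  τ.noForall false ∧ ∀ σ ∈ Γ, σ.noForall true

namespace Der

/-- A derivation is cut-free when it contains no instance of `cut`. -/
def cutFree : ∀ {Γ M τ}, Der Γ M τ → Prop
  | _, _, _, .ax _ => True
  | _, _, _, .exch _ D => D.cutFree
  | _, _, _, .cut _ _ _ => False
  | _, _, _, .arrR _ D => D.cutFree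
  | _, _, _, .arrL _ _ D₁ D₂ => D₁.cutFree ∧ D₂.cutFree
  | _, _, _, .allR _ D => D.cutFree
  | _, _, _, .allL _ _ D => D.cutFree
  | _, _, _, .prom _ _ D => D.cutFree
  | _, _, _, .der _ D => D.cutFree
  | _, _, _, .weak _ D => D.cutFree
  | _, _, _, .contr _ _ D₁ D₂ => D₁.cutFree ∧ D₂.cutFree

/-- The size of a derivation (Definition 6.2): `1` for an axiom, `+1` for every
rule instance except contraction which counts `+3`; the administrative rule
`exch` (implicit in the multiset contexts of the paper) does not count. -/
def size : ∀ {Γ M τ}, Der Γ M τ → ℕ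
  | _, _, _, .ax _ => 1
  | _, _, _, .exch _ D => D.size
  | _, _, _, .cut _ D₁ D₂ => D₁.size + D₂.size + 1
  | _, _, _, .arrR _ D => D.size + 1
  | _, _, _, .arrL _ _ D₁ D₂ => D₁.size + D₂.size + 1
  | _, _, _, .allR _ D => D.size + 1
  | _, _, _, .allL _ _ D => D.size + 1
  | _, _, _, .prom _ _ D => D.size + 1
  | _, _, _, .der _ D => D.size + 1
  | _, _, _, .weak _ D => D.size + 1
  | _, _, _, .contr _ _ D₁ D₂ => D₁.size + D₂.size + 3

end Der

end LEMPaper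

namespace LEMPaper

/-! ### Type-level auxiliary lemmas -/

theorem LTy.noForall_rename : ∀ (A : LTy) (ρ : ℕ → ℕ) (b : Bool),
    (A.rename ρ).noForall b ↔ A.noForall b
  | .var _, _, _ => Iff.rfl
  | .arr A B, ρ, b => by
      simp only [LTy.rename, LTy.noForall]
      rw [LTy.noForall_rename A ρ (!b), LTy.noForall_rename B ρ b]
  | .all A, ρ, b => by
      simp only [LTy.rename, LTy.noForall]
      rw [LTy.noForall_rename A _ b]
  | .bang A, ρ, b => by
      simp only [LTy.rename, LTy.noForall]
      rw [LTy.noForall_rename A ρ b]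

theorem LTy.size_rename : ∀ (A : LTy) (ρ : ℕ → ℕ), (A.rename ρ).size = A.size
  | .var _, _ => rfl
  | .arr A B, ρ => by simp [LTy.rename, LTy.size, LTy.size_rename A, LTy.size_rename B]
  | .all A, ρ => by simp [LTy.rename, LTy.size, LTy.size_rename A]
  | .bang A, ρ => by simp [LTy.rename, LTy.size, LTy.size_rename A]

theorem LTy.qmCount_rename : ∀ (A : LTy) (ρ : ℕ → ℕ), (A.rename ρ).qmCount = A.qmCount
  | .var _, _ => rfl
  | .arr A B, ρ => by simp [LTy.rename, LTy.qmCount, LTy.qmCount_rename A, LTy.qmCount_rename B]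
  | .all A, ρ => by simp [LTy.rename, LTy.qmCount, LTy.qmCount_rename A]
  | .bang A, ρ => by simp [LTy.rename, LTy.qmCount, LTy.qmCount_rename A]

theorem LTy.size_pos : ∀ (A : LTy), 1 ≤ A.size
  | .var _ => le_refl 1
  | .arr A B => by simp [LTy.size]
  | .all A => by simp [LTy.size]
  | .bang A => by simp [LTy.size]

/-- No type is closed and without occurrences of `∀` in both polarities. -/
theorem LTy.closed_no_both : ∀ (A : LTy), A.ClosedAt 0 → A.noForall true → A.noForall false → False
  | .var n, h, _, _ => by simp [LTy.ClosedAt] at h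
  | .arr A B, h, ht, hf => by
      simp only [LTy.ClosedAt] at h
      simp only [LTy.noForall] at ht hf
      exact LTy.closed_no_both B h.2 ht.2 hf.2
  | .all A, _, ht, _ => by simp [LTy.noForall] at ht
  | .bang A, h, ht, hf => by
      simp only [LTy.ClosedAt] at h
      simp only [LTy.noForall] at ht hf
      exact LTy.closed_no_both A h ht hf

/-- A linear (or exponential) type without occurrences of `∀` in both polarities
contains no `∀` and no `♯` at all. -/
theorem LTy.qmCount_eq_zero : ∀ (A : LTy), A.IsExp → A.noForall true → A.noForall false → A.qmCount = 0
  | .var _, _, _, _ => rfl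
  | .arr A B, hE, ht, hf => by
      have hAB : A.IsExp ∧ B.IsExp := by
        cases hE with
        | lin h => cases h with
          | arr hA hB => exact ⟨hA, .lin hB⟩
      simp only [LTy.noForall] at ht hf
      simp only [LTy.qmCount]
      rw [LTy.qmCount_eq_zero A hAB.1 hf.1 ht.1, LTy.qmCount_eq_zero B hAB.2 ht.2 hf.2]
  | .all A, _, ht, _ => by simp [LTy.noForall] at ht
  | .bang A, hE, ht, hf => by
      cases hE with
      | lin h => cases h
      | bang hσ hc hnf =>
          simp only [LTy.noForall] at ht
          exact absurd (LTy.closed_no_both A hc ht hnf) (fun h => h)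

end LEMPaper
namespace LEMPaper

/-! ### Term-level renaming lemmas -/

theorem liftRen_zero (ρ : ℕ → ℕ) : LTm.liftRen ρ 0 = 0 := rfl
theorem liftRen_succ (ρ : ℕ → ℕ) (n : ℕ) : LTm.liftRen ρ (n + 1) = ρ n + 1 := rfl

theorem liftRen_inj {ρ : ℕ → ℕ} (h : Function.Injective ρ) :
    Function.Injective (LTm.liftRen ρ) := by
  intro a b hab
  cases a <;> cases b <;> simp [LTm.liftRen] at hab ⊢
  exact h hab

theorem countFree_rename_eq (M : LTm) : ∀ (ρ : ℕ → ℕ), Function.Injective ρ →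
    ∀ m, (M.rename ρ).countFree (ρ m) = M.countFree m := by
  induction M with
  | var v =>
      intro ρ hρ m
      simp only [LTm.rename, LTm.countFree]
      by_cases h : v = m
      · simp [h]
      · rw [if_neg (fun hc => h (hρ hc)), if_neg h]
  | app M N ihM ihN =>
      intro ρ hρ m
      simp only [LTm.rename, LTm.countFree, ihM ρ hρ m, ihN ρ hρ m]
  | lam M ih =>
      intro ρ hρ m
      show (M.rename (LTm.liftRen ρ)).countFree (ρ m + 1) = M.countFree (m + 1)
      rw [show ρ m + 1 = LTm.liftRen ρ (m + 1) from rfl]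
      exact ih _ (liftRen_inj hρ) _
  | discard σ M N ihM ihN =>
      intro ρ hρ m
      simp only [LTm.rename, LTm.countFree, ihM ρ hρ m, ihN ρ hρ m]
  | copy σ V S B ihV ihS ihB =>
      intro ρ hρ m
      show (S.rename ρ).countFree (ρ m) +
        (B.rename (LTm.liftRen (LTm.liftRen ρ))).countFree (ρ m + 2) =
        S.countFree m + B.countFree (m + 2)
      rw [ihS ρ hρ m,
        show ρ m + 2 = LTm.liftRen (LTm.liftRen ρ) (m + 2) from rfl,
        ihB _ (liftRen_inj (liftRen_inj hρ)) (m + 2)]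

theorem countFree_rename_zero (M : LTm) : ∀ (ρ : ℕ → ℕ) (n : ℕ), (∀ m, ρ m ≠ n) →
    (M.rename ρ).countFree n = 0 := by
  induction M with
  | var v => intro ρ n h; simp [LTm.rename, LTm.countFree, h v]
  | app M N ihM ihN => intro ρ n h; simp [LTm.rename, LTm.countFree, ihM ρ n h, ihN ρ n h]
  | lam M ih =>
      intro ρ n h
      show (M.rename (LTm.liftRen ρ)).countFree (n + 1) = 0
      apply ih
      intro m
      cases m with
      | zero => simp [LTm.liftRen]
      | succ m => simp [LTm.liftRen]; exact fun hc => h m hc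
  | discard σ M N ihM ihN =>
      intro ρ n h; simp [LTm.rename, LTm.countFree, ihM ρ n h, ihN ρ n h]
  | copy σ V S B ihV ihS ihB =>
      intro ρ n h
      show (S.rename ρ).countFree n +
        (B.rename (LTm.liftRen (LTm.liftRen ρ))).countFree (n + 2) = 0
      rw [ihS ρ n h, ihB _ (n + 2) ?_]
      intro m
      match m with
      | 0 => simp [LTm.liftRen]
      | 1 => simp [LTm.liftRen]
      | m + 2 =>
          show ρ m + 1 + 1 ≠ n + 2
          have := h m
          omega

theorem countFree_shift_succ (M : LTm) (n : ℕ) : M.shift.countFree (n + 1) = M.countFree n :=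
  countFree_rename_eq M Nat.succ (fun _ _ h => Nat.succ_injective h) n

theorem countFree_shift_zero (M : LTm) : M.shift.countFree 0 = 0 :=
  countFree_rename_zero M Nat.succ 0 (fun m => Nat.succ_ne_zero m)

theorem size_rename (M : LTm) : ∀ (ρ : ℕ → ℕ), (M.rename ρ).size = M.size := by
  induction M with
  | var v => intro ρ; rfl
  | app M N ihM ihN => intro ρ; simp [LTm.rename, LTm.size, ihM, ihN]
  | lam M ih => intro ρ; simp [LTm.rename, LTm.size, ih]
  | discard σ M N ihM ihN => intro ρ; simp [LTm.rename, LTm.size, ihM, ihN]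
  | copy σ V S B ihV ihS ihB => intro ρ; simp [LTm.rename, LTm.size, ihS, ihB]

theorem pure_rename (M : LTm) : ∀ (ρ : ℕ → ℕ), M.IsPure → (M.rename ρ).IsPure := by
  induction M with
  | var v => intro ρ h; trivial
  | app M N ihM ihN => intro ρ h; exact ⟨ihM ρ h.1, ihN ρ h.2⟩
  | lam M ih => intro ρ h; exact ih _ h
  | discard σ M N ihM ihN => intro ρ h; exact h.elim
  | copy σ V S B ihV ihS ihB => intro ρ h; exact h.elim

theorem linear_rename (M : LTm) : ∀ (ρ : ℕ → ℕ), Function.Injective ρ →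
    M.IsPure → M.LinearTm → (M.rename ρ).LinearTm := by
  induction M with
  | var v => intro ρ hρ hp h; trivial
  | app M N ihM ihN =>
      intro ρ hρ hp h
      refine ⟨ihM ρ hρ hp.1 h.1, ihN ρ hρ hp.2 h.2.1, fun n => ?_⟩
      by_cases hex : ∃ m, ρ m = n
      · obtain ⟨m, rfl⟩ := hex
        rw [countFree_rename_eq M ρ hρ m, countFree_rename_eq N ρ hρ m]
        exact h.2.2 m
      · left
        exact countFree_rename_zero M ρ n (fun m hm => hex ⟨m, hm⟩)
  | lam M ih =>
      intro ρ hρ hp h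
      refine ⟨ih _ (liftRen_inj hρ) hp h.1, ?_⟩
      show (M.rename (LTm.liftRen ρ)).countFree 0 = 1
      rw [show (0 : ℕ) = LTm.liftRen ρ 0 from rfl,
        countFree_rename_eq M _ (liftRen_inj hρ) 0]
      exact h.2
  | discard σ M N ihM ihN => intro ρ hρ hp h; exact hp.elim
  | copy σ V S B ihV ihS ihB => intro ρ hρ hp h; exact hp.elim

end LEMPaper
namespace LEMPaper

/-! ### Normal forms -/

mutual
  /-- Neutral pure terms. -/
  inductive Neu : LTm → Prop
    | var (n : ℕ) : Neu (.var n)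
    | app {M N : LTm} : Neu M → Nrm M → Nrm N → Neu (.app M N)
  /-- Pure terms in β-normal form. -/
  inductive Nrm : LTm → Prop
    | ne {M : LTm} : Neu M → Nrm M
    | lam {M : LTm} : Nrm M → Nrm (.lam M)
end

theorem nrm_rename (M : LTm) : ∀ (ρ : ℕ → ℕ),
    (Nrm M → Nrm (M.rename ρ)) ∧ (Neu M → Neu (M.rename ρ)) := by
  induction M with
  | var v => exact fun ρ => ⟨fun _ => .ne (.var _), fun _ => .var _⟩
  | app M N ihM ihN =>
      intro ρ
      constructor
      · rintro (⟨hM⟩ | _)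
        cases hM with
        | app h1 h2 h3 => exact .ne (.app ((ihM ρ).2 h1) ((ihM ρ).1 h2) ((ihN ρ).1 h3))
      · rintro (⟨n⟩ | ⟨h1, h2, h3⟩)
        exact .app ((ihM ρ).2 h1) ((ihM ρ).1 h2) ((ihN ρ).1 h3)
  | lam M ih =>
      intro ρ
      constructor
      · intro h
        cases h with
        | ne h => cases h
        | lam h => exact .lam ((ih _).1 h)
      · intro h; cases h
  | discard σ M N ihM ihN =>
      intro ρ
      constructor
      · intro h; cases h with | ne h => cases h
      · intro h; cases h
  | copy σ V S B ihV ihS ihB =>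
      intro ρ
      constructor
      · intro h; cases h with | ne h => cases h
      · intro h; cases h

theorem nrm_not_step : ∀ {M N : LTm}, Step M N → Nrm M → False := by
  intro M N hs
  induction hs with
  | beta M N => rintro (⟨h⟩|_); rcases h with _ | ⟨h1, h2, h3⟩; cases h1
  | discardV σ M hV => rintro (⟨h⟩|_); cases h
  | copyV σ U B hV => rintro (⟨h⟩|_); cases h
  | discardApp σ M N P => rintro (⟨h⟩|_); rcases h with _ | ⟨h1, h2, h3⟩; cases h1
  | discardDiscard σ τ M N P => rintro (⟨h⟩|_); cases h
  | copyDiscard σ τ V M N B => rintro (⟨h⟩|_); cases h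
  | copyApp σ V M B P => rintro (⟨h⟩|_); rcases h with _ | ⟨h1, h2, h3⟩; cases h1
  | discardCopy σ τ V M N P => rintro (⟨h⟩|_); cases h
  | copyCopy σ τ U V M N P => rintro (⟨h⟩|_); cases h
  | appL N hs ih => rintro (⟨h⟩|_); rcases h with _ | ⟨h1, h2, h3⟩; exact ih h2
  | appR M hs ih => rintro (⟨h⟩|_); rcases h with _ | ⟨h1, h2, h3⟩; exact ih h3
  | lamC hs ih =>
      intro h
      cases h with
      | ne h => cases h
      | lam h => exact ih h
  | discardL σ N hs ih => rintro (⟨h⟩|_); cases h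
  | discardR σ M hs ih => rintro (⟨h⟩|_); cases h
  | copyS σ V B hs ih => rintro (⟨h⟩|_); cases h
  | copyB σ V S hs ih => rintro (⟨h⟩|_); cases h

end LEMPaper
namespace LEMPaper

/-! ### Substitution lemmas -/

theorem liftSub_zero (s : ℕ → LTm) : LTm.liftSub s 0 = .var 0 := rfl
theorem liftSub_succ (s : ℕ → LTm) (n : ℕ) : LTm.liftSub s (n + 1) = (s n).shift := rfl

theorem countFree_bound (M : LTm) : ∃ K, ∀ m, K ≤ m → M.countFree m = 0 := by
  induction M with
  | var v => exact ⟨v + 1, fun m hm => by simp [LTm.countFree]; omega⟩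
  | app M N ihM ihN =>
      obtain ⟨K1, h1⟩ := ihM; obtain ⟨K2, h2⟩ := ihN
      exact ⟨max K1 K2, fun m hm => by
        simp [LTm.countFree, h1 m (le_trans (le_max_left _ _) hm),
          h2 m (le_trans (le_max_right _ _) hm)]⟩
  | lam M ih =>
      obtain ⟨K, h⟩ := ih
      exact ⟨K, fun m hm => h (m + 1) (by omega)⟩
  | discard σ M N ihM ihN =>
      obtain ⟨K1, h1⟩ := ihM; obtain ⟨K2, h2⟩ := ihN
      exact ⟨max K1 K2, fun m hm => by
        simp [LTm.countFree, h1 m (le_trans (le_max_left _ _) hm),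
          h2 m (le_trans (le_max_right _ _) hm)]⟩
  | copy σ V S B ihV ihS ihB =>
      obtain ⟨K1, h1⟩ := ihS; obtain ⟨K2, h2⟩ := ihB
      exact ⟨max K1 K2, fun m hm => by
        simp [LTm.countFree, h1 m (le_trans (le_max_left _ _) hm),
          h2 (m + 2) (by omega)]⟩

theorem sum_indicator (a n : ℕ) : ∀ d : ℕ,
    (∑ m ∈ Finset.range d, if a + m = n then 1 else 0) =
      if a ≤ n ∧ n < a + d then 1 else 0 := by
  intro d
  induction d with
  | zero =>
      simp only [Finset.range_zero, Finset.sum_empty]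
      split_ifs <;> omega
  | succ d ih =>
      rw [Finset.sum_range_succ, ih]
      split_ifs <;> omega

theorem countFree_substAll (M : LTm) : ∀ (s : ℕ → LTm) (K n : ℕ), M.IsPure →
    (∀ m, K ≤ m → M.countFree m = 0) →
    (M.substAll s).countFree n
      = ∑ m ∈ Finset.range K, M.countFree m * (s m).countFree n := by
  induction M with
  | var v =>
      intro s K n _ hb
      have hv : v < K := by
        by_contra h
        have := hb v (by omega)
        simp [LTm.countFree] at this
      show (s v).countFree n = _
      rw [Finset.sum_congr rfl (fun m _ => show (LTm.var v).countFree m * (s m).countFree n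
          = if v = m then (s m).countFree n else 0 by
        simp only [LTm.countFree]; split <;> simp)]
      rw [Finset.sum_ite_eq]
      simp [Finset.mem_range.mpr hv]
  | app M N ihM ihN =>
      intro s K n hp hb
      have hbM : ∀ m, K ≤ m → M.countFree m = 0 := fun m hm => by
        have := hb m hm; simp [LTm.countFree] at this; omega
      have hbN : ∀ m, K ≤ m → N.countFree m = 0 := fun m hm => by
        have := hb m hm; simp [LTm.countFree] at this; omega
      show (M.substAll s).countFree n + (N.substAll s).countFree n = _
      rw [ihM s K n hp.1 hbM, ihN s K n hp.2 hbN, ← Finset.sum_add_distrib]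
      exact Finset.sum_congr rfl (fun m _ => by simp [LTm.countFree]; ring)
  | lam M ih =>
      intro s K n hp hb
      show (M.substAll (LTm.liftSub s)).countFree (n + 1) = _
      rw [ih (LTm.liftSub s) (K + 1) (n + 1) hp (fun m hm => by
        match m, hm with
        | m + 1, hm => exact hb m (by omega))]
      rw [Finset.sum_range_succ']
      simp only [liftSub_succ, liftSub_zero, countFree_shift_succ]
      simp [LTm.countFree]
  | discard σ M N ihM ihN => intro s K n hp hb; exact hp.elim
  | copy σ V S B ihV ihS ihB => intro s K n hp hb; exact hp.elim

theorem size_substAll (M : LTm) : ∀ (s : ℕ → LTm) (K : ℕ), M.IsPure →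
    (∀ m, K ≤ m → M.countFree m = 0) →
    (M.substAll s).size + ∑ m ∈ Finset.range K, M.countFree m
      = M.size + ∑ m ∈ Finset.range K, M.countFree m * (s m).size := by
  induction M with
  | var v =>
      intro s K hp hb
      have hv : v < K := by
        by_contra h
        have := hb v (by omega)
        simp [LTm.countFree] at this
      show (s v).size + _ = 1 + _
      have h1 : (∑ m ∈ Finset.range K, (LTm.var v).countFree m) = 1 := by
        rw [Finset.sum_congr rfl (fun m _ => show (LTm.var v).countFree m
            = if v = m then 1 else 0 by simp [LTm.countFree])]
        rw [Finset.sum_ite_eq]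
        simp [Finset.mem_range.mpr hv]
      have h2 : (∑ m ∈ Finset.range K, (LTm.var v).countFree m * (s m).size) = (s v).size := by
        rw [Finset.sum_congr rfl (fun m _ => show (LTm.var v).countFree m * (s m).size
            = if v = m then (s m).size else 0 by
          simp only [LTm.countFree]; split <;> simp)]
        rw [Finset.sum_ite_eq]
        simp [Finset.mem_range.mpr hv]
      rw [h1, h2]; omega
  | app M N ihM ihN =>
      intro s K hp hb
      have hbM : ∀ m, K ≤ m → M.countFree m = 0 := fun m hm => by
        have := hb m hm; simp [LTm.countFree] at this; omega
      have hbN : ∀ m, K ≤ m → N.countFree m = 0 := fun m hm => by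
        have := hb m hm; simp [LTm.countFree] at this; omega
      have e1 := ihM s K hp.1 hbM
      have e2 := ihN s K hp.2 hbN
      have e3 : (∑ m ∈ Finset.range K, (LTm.app M N).countFree m)
          = (∑ m ∈ Finset.range K, M.countFree m) + ∑ m ∈ Finset.range K, N.countFree m := by
        rw [← Finset.sum_add_distrib]; rfl
      have e4 : (∑ m ∈ Finset.range K, (LTm.app M N).countFree m * (s m).size)
          = (∑ m ∈ Finset.range K, M.countFree m * (s m).size)
            + ∑ m ∈ Finset.range K, N.countFree m * (s m).size := by
        rw [← Finset.sum_add_distrib]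
        exact Finset.sum_congr rfl (fun m _ => by simp [LTm.countFree]; ring)
      show (M.substAll s).size + (N.substAll s).size + 1 + _ = M.size + N.size + 1 + _
      rw [e3, e4]; omega
  | lam M ih =>
      intro s K hp hb
      have e := ih (LTm.liftSub s) (K + 1) hp (fun m hm => by
        match m, hm with
        | m + 1, hm => exact hb m (by omega))
      rw [Finset.sum_range_succ', Finset.sum_range_succ'] at e
      simp only [liftSub_succ, liftSub_zero] at e
      have hsz : ∀ m : ℕ, ((s m).shift).size = (s m).size := fun m => size_rename _ _
      simp only [hsz] at e
      have hv0 : (LTm.var 0).size = 1 := rfl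
      rw [hv0] at e
      show (M.substAll (LTm.liftSub s)).size + 1 + ∑ m ∈ Finset.range K, M.countFree (m + 1)
          = M.size + 1 + ∑ m ∈ Finset.range K, M.countFree (m + 1) * (s m).size
      omega
  | discard σ M N ihM ihN => intro s K hp hb; exact hp.elim
  | copy σ V S B ihV ihS ihB => intro s K hp hb; exact hp.elim

theorem pure_substAll (M : LTm) : ∀ (s : ℕ → LTm), M.IsPure → (∀ m, (s m).IsPure) →
    (M.substAll s).IsPure := by
  induction M with
  | var v => intro s _ hs; exact hs v
  | app M N ihM ihN => intro s hp hs; exact ⟨ihM s hp.1 hs, ihN s hp.2 hs⟩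
  | lam M ih =>
      intro s hp hs
      refine ih _ hp (fun m => ?_)
      match m with
      | 0 => trivial
      | m + 1 => exact pure_rename _ _ (hs m)
  | discard σ M N ihM ihN => intro s hp _; exact hp.elim
  | copy σ V S B ihV ihS ihB => intro s hp _; exact hp.elim

theorem nrm_substAll (M : LTm) : ∀ (s : ℕ → LTm), (∀ m, Neu (s m)) →
    (Nrm M → Nrm (M.substAll s)) ∧ (Neu M → Neu (M.substAll s)) := by
  induction M with
  | var v => intro s hs; exact ⟨fun _ => .ne (hs v), fun _ => hs v⟩
  | app M N ihM ihN =>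
      intro s hs
      constructor
      · rintro (⟨hM⟩ | _)
        rcases hM with _ | ⟨h1, h2, h3⟩
        exact .ne (.app ((ihM s hs).2 h1) ((ihM s hs).1 h2) ((ihN s hs).1 h3))
      · rintro (⟨n⟩ | ⟨h1, h2, h3⟩)
        exact .app ((ihM s hs).2 h1) ((ihM s hs).1 h2) ((ihN s hs).1 h3)
  | lam M ih =>
      intro s hs
      have hs' : ∀ m, Neu (LTm.liftSub s m) := by
        intro m
        match m with
        | 0 => exact .var 0
        | m + 1 => exact (nrm_rename (s m) Nat.succ).2 (hs m)
      constructor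
      · intro h
        cases h with
        | ne h => cases h
        | lam h => exact .lam ((ih _ hs').1 h)
      · intro h; cases h
  | discard σ M N ihM ihN =>
      intro s hs
      constructor
      · intro h
        cases h with | ne h => cases h
      · intro h
        cases h
  | copy σ V S B ihV ihS ihB =>
      intro s hs
      constructor
      · intro h
        cases h with | ne h => cases h
      · intro h
        cases h

end LEMPaper
namespace LEMPaper

theorem liftSub_pure {s : ℕ → LTm} (hs : ∀ m, (s m).IsPure) :
    ∀ m, (LTm.liftSub s m).IsPure := by
  intro m
  match m with
  | 0 => trivial
  | m + 1 => exact pure_rename _ _ (hs m)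

theorem liftSub_linear {s : ℕ → LTm} (hp : ∀ m, (s m).IsPure)
    (hs : ∀ m, (s m).LinearTm) : ∀ m, (LTm.liftSub s m).LinearTm := by
  intro m
  match m with
  | 0 => trivial
  | m + 1 => exact linear_rename _ _ (fun _ _ h => Nat.succ_injective h) (hp m) (hs m)

theorem liftSub_disjoint {s : ℕ → LTm}
    (hd : ∀ m m', m ≠ m' → ∀ n, (s m).countFree n = 0 ∨ (s m').countFree n = 0) :
    ∀ m m', m ≠ m' → ∀ n,
      (LTm.liftSub s m).countFree n = 0 ∨ (LTm.liftSub s m').countFree n = 0 := by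
  intro m m' hne n
  match m, m' with
  | 0, 0 => exact absurd rfl hne
  | 0, m' + 1 =>
      match n with
      | 0 => exact Or.inr (countFree_shift_zero _)
      | n + 1 => exact Or.inl (by simp [liftSub_zero, LTm.countFree])
  | m + 1, 0 =>
      match n with
      | 0 => exact Or.inl (countFree_shift_zero _)
      | n + 1 => exact Or.inr (by simp [liftSub_zero, LTm.countFree])
  | m + 1, m' + 1 =>
      match n with
      | 0 => exact Or.inl (countFree_shift_zero _)
      | n + 1 =>
          rw [liftSub_succ, liftSub_succ, countFree_shift_succ, countFree_shift_succ]
          exact hd m m' (fun h => hne (by omega)) n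

theorem linear_substAll (M : LTm) : ∀ (s : ℕ → LTm), M.IsPure → M.LinearTm →
    (∀ m, (s m).IsPure) → (∀ m, (s m).LinearTm) →
    (∀ m m', m ≠ m' → ∀ n, (s m).countFree n = 0 ∨ (s m').countFree n = 0) →
    (M.substAll s).LinearTm := by
  induction M with
  | var v => intro s _ _ _ hl _; exact hl v
  | app M N ihM ihN =>
      intro s hp hlin hps hls hd
      refine ⟨ihM s hp.1 hlin.1 hps hls hd, ihN s hp.2 hlin.2.1 hps hls hd, fun n => ?_⟩
      by_contra hcon
      push_neg at hcon
      obtain ⟨hM0, hN0⟩ := hcon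
      obtain ⟨KM, hKM⟩ := countFree_bound M
      obtain ⟨KN, hKN⟩ := countFree_bound N
      rw [countFree_substAll M s KM n hp.1 hKM] at hM0
      rw [countFree_substAll N s KN n hp.2 hKN] at hN0
      obtain ⟨m1, _, h1⟩ := Finset.exists_ne_zero_of_sum_ne_zero hM0
      obtain ⟨m2, _, h2⟩ := Finset.exists_ne_zero_of_sum_ne_zero hN0
      have hm1 : M.countFree m1 ≠ 0 ∧ (s m1).countFree n ≠ 0 := by
        constructor <;> intro h <;> simp [h] at h1
      have hm2 : N.countFree m2 ≠ 0 ∧ (s m2).countFree n ≠ 0 := by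
        constructor <;> intro h <;> simp [h] at h2
      have hne : m1 ≠ m2 := by
        intro h
        subst h
        rcases hlin.2.2 m1 with h | h
        · exact hm1.1 h
        · exact hm2.1 h
      rcases hd m1 m2 hne n with h | h
      · exact hm1.2 h
      · exact hm2.2 h
  | lam M ih =>
      intro s hp hlin hps hls hd
      refine ⟨ih _ hp hlin.1 (liftSub_pure hps) (liftSub_linear hps hls)
        (liftSub_disjoint hd), ?_⟩
      show (M.substAll (LTm.liftSub s)).countFree 0 = 1
      obtain ⟨K, hK⟩ := countFree_bound M
      rw [countFree_substAll M (LTm.liftSub s) (K + 1) 0 hp (fun m hm => hK m (by omega))]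
      rw [Finset.sum_range_succ']
      simp only [liftSub_succ, liftSub_zero, countFree_shift_zero]
      simp [LTm.countFree, hlin.2]
  | discard σ M N ihM ihN => intro s hp _ _ _ _; exact hp.elim
  | copy σ V S B ihV ihS ihB => intro s hp _ _ _ _; exact hp.elim

end LEMPaper
namespace LEMPaper

theorem swapVar_inj (k : ℕ) : Function.Injective (swapVar k) := by
  intro a b h
  simp only [swapVar] at h
  split_ifs at h <;> omega

theorem swapVar_invol (k i : ℕ) : swapVar k (swapVar k i) = i := by
  simp only [swapVar]
  split_ifs <;> omega

/-- The substitution used by the `⊸L` rule. -/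
def sArr (g : ℕ) (N : LTm) : ℕ → LTm
  | 0 => .app (.var 0) N.shift
  | m + 1 => .var (g + 1 + m)

theorem arrLTm_eq (g : ℕ) (N M : LTm) : arrLTm g N M = M.substAll (sArr g N) := by
  unfold arrLTm
  congr 1

theorem mem_exch {Γ₁ Γ₂ : List LTy} {σ τ x : LTy} :
    x ∈ Γ₁ ++ σ :: τ :: Γ₂ → x ∈ Γ₁ ++ τ :: σ :: Γ₂ := by
  simp only [List.mem_append, List.mem_cons]
  tauto

theorem main_lemma : ∀ {Γ : List LTy} {M : LTm} {σ : LTy} (D : Der Γ M σ),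
    D.cutFree → LazyJudg Γ σ →
    M.IsPure ∧ Nrm M ∧ M.LinearTm ∧
    (∀ i, M.countFree i = if i < Γ.length then 1 else 0) ∧
    M.size ≤ (Γ.map LTy.size).sum + σ.size ∧
    D.size = M.size + ((Γ.map LTy.qmCount).sum + σ.qmCount) := by
  intro Γ M σ D
  induction D with
  | @ax A hA =>
      intro _ hl
      have h0 : A.qmCount = 0 :=
        LTy.qmCount_eq_zero A (.lin hA) (hl.2 A (by simp)) hl.1
      refine ⟨trivial, .ne (.var 0), trivial, ?_, ?_, ?_⟩
      · intro i
        simp only [LTm.countFree, List.length_cons, List.length_nil]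
        split_ifs <;> omega
      · have := LTy.size_pos A
        simp only [LTm.size, List.map_cons, List.map_nil, List.sum_cons, List.sum_nil]
        omega
      · simp [Der.size, LTm.size, h0]
  | @exch Γ₁ s t Γ₂ M C D ih =>
      intro hcf hl
      have hl' : LazyJudg (Γ₁ ++ s :: t :: Γ₂) C :=
        ⟨hl.1, fun x hx => hl.2 x (mem_exch hx)⟩
      obtain ⟨hp, hn, hlin, hc, hsz, hds⟩ := ih hcf hl'
      have esz : ((Γ₁ ++ t :: s :: Γ₂).map LTy.size).sum
          = ((Γ₁ ++ s :: t :: Γ₂).map LTy.size).sum := by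
        simp only [List.map_append, List.sum_append, List.map_cons, List.sum_cons]
        omega
      have eqm : ((Γ₁ ++ t :: s :: Γ₂).map LTy.qmCount).sum
          = ((Γ₁ ++ s :: t :: Γ₂).map LTy.qmCount).sum := by
        simp only [List.map_append, List.sum_append, List.map_cons, List.sum_cons]
        omega
      refine ⟨pure_rename _ _ hp, (nrm_rename _ _).1 hn,
        linear_rename _ _ (swapVar_inj _) hp hlin, ?_, ?_, ?_⟩
      · intro i
        have h1 : (M.rename (swapVar Γ₁.length)).countFree i
            = M.countFree (swapVar Γ₁.length i) := by
          conv_lhs => rw [← swapVar_invol Γ₁.length i]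
          exact countFree_rename_eq M _ (swapVar_inj _) _
        rw [h1, hc]
        simp only [List.length_append, List.length_cons, swapVar]
        split_ifs <;> omega
      · rw [size_rename, esz]
        exact hsz
      · show D.size = _
        rw [size_rename, eqm, hds]
  | cut Γ D₁ D₂ ih₁ ih₂ =>
      intro hcf
      exact hcf.elim
  | @arrR Γ M σ B hB D ih =>
      intro hcf hl
      have hl1 : σ.noForall true ∧ B.noForall false := hl.1
      have hl' : LazyJudg (σ :: Γ) B := ⟨hl1.2, fun x hx => by
        rcases List.mem_cons.mp hx with rfl | hx
        · exact hl1.1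
        · exact hl.2 x hx⟩
      obtain ⟨hp, hn, hlin, hc, hsz, hds⟩ := ih hcf hl'
      refine ⟨hp, .lam hn, ⟨hlin, by simpa using hc 0⟩, ?_, ?_, ?_⟩
      · intro i
        show M.countFree (i + 1) = _
        rw [hc (i + 1)]
        simp only [List.length_cons]
        split_ifs <;> omega
      · simp only [LTm.size, LTy.size]
        simp only [List.map_cons, List.sum_cons] at hsz
        omega
      · show D.size + 1 = _
        simp only [List.map_cons, List.sum_cons] at hds
        simp only [LTm.size, LTy.qmCount]
        omega
  | @arrL Γ Δ N M σ B τ hB D₁ D₂ ih₁ ih₂ =>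
      intro hcf hl
      obtain ⟨hcf₁, hcf₂⟩ := hcf
      have hhead : σ.noForall false ∧ B.noForall true := hl.2 _ List.mem_cons_self
      have hl₁ : LazyJudg Γ σ := ⟨hhead.1, fun x hx => hl.2 x (by simp [hx])⟩
      have hl₂ : LazyJudg (B :: Δ) τ := ⟨hl.1, fun x hx => by
        rcases List.mem_cons.mp hx with rfl | hx
        · exact hhead.2
        · exact hl.2 x (by simp [hx])⟩
      obtain ⟨hp₁, hn₁, hlin₁, hc₁, hsz₁, hds₁⟩ := ih₁ hcf₁ hl₁
      obtain ⟨hp₂, hn₂, hlin₂, hc₂, hsz₂, hds₂⟩ := ih₂ hcf₂ hl₂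
      have spure : ∀ m, (sArr Γ.length N m).IsPure := by
        intro m
        match m with
        | 0 => exact ⟨trivial, pure_rename _ _ hp₁⟩
        | m + 1 => trivial
      have sneu : ∀ m, Neu (sArr Γ.length N m) := by
        intro m
        match m with
        | 0 => exact .app (.var 0) (.ne (.var 0)) ((nrm_rename N _).1 hn₁)
        | m + 1 => exact .var _
      have slin : ∀ m, (sArr Γ.length N m).LinearTm := by
        intro m
        match m with
        | 0 =>
            refine ⟨trivial, linear_rename N _ (fun _ _ h => Nat.succ_injective h) hp₁ hlin₁,
              fun n => ?_⟩
            match n with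
            | 0 => exact Or.inr (countFree_shift_zero N)
            | n + 1 => exact Or.inl (by simp [LTm.countFree])
        | m + 1 => trivial
      have hshift : ∀ n, (N.shift).countFree n
          = if 1 ≤ n ∧ n < Γ.length + 1 then 1 else 0 := by
        intro n
        match n with
        | 0 => rw [countFree_shift_zero, if_neg (by omega)]
        | n + 1 =>
            rw [countFree_shift_succ, hc₁ n]
            split_ifs <;> omega
      have s0count : ∀ n, (sArr Γ.length N 0).countFree n
          = if n < Γ.length + 1 then 1 else 0 := by
        intro n
        show (LTm.var 0).countFree n + (N.shift).countFree n = _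
        rw [hshift n]
        simp only [LTm.countFree]
        split_ifs <;> omega
      have sdisj : ∀ m m', m ≠ m' → ∀ n,
          (sArr Γ.length N m).countFree n = 0 ∨ (sArr Γ.length N m').countFree n = 0 := by
        intro m m' hne n
        match m, m' with
        | 0, 0 => exact absurd rfl hne
        | 0, m' + 1 =>
            by_cases h : n < Γ.length + 1
            · right
              show (LTm.var (Γ.length + 1 + m')).countFree n = 0
              simp only [LTm.countFree]
              rw [if_neg (by omega)]
            · left
              rw [s0count n, if_neg h]
        | m + 1, 0 =>
            by_cases h : n < Γ.length + 1
            · left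
              show (LTm.var (Γ.length + 1 + m)).countFree n = 0
              simp only [LTm.countFree]
              rw [if_neg (by omega)]
            · right
              rw [s0count n, if_neg h]
        | m + 1, m' + 1 =>
            by_cases h : Γ.length + 1 + m = n
            · right
              show (LTm.var (Γ.length + 1 + m')).countFree n = 0
              simp only [LTm.countFree]
              rw [if_neg (by omega)]
            · left
              show (LTm.var (Γ.length + 1 + m)).countFree n = 0
              simp only [LTm.countFree]
              rw [if_neg h]
      have hbM : ∀ m, Δ.length + 1 ≤ m → M.countFree m = 0 := by
        intro m hm
        rw [hc₂ m, if_neg (by simp only [List.length_cons]; omega)]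
      have hMone : ∀ m ∈ Finset.range (Δ.length + 1), M.countFree m = 1 := by
        intro m hm
        rw [hc₂ m, if_pos (by simp only [List.length_cons]; exact Finset.mem_range.mp hm)]
      have hcount2 : ∀ n, (M.substAll (sArr Γ.length N)).countFree n
          = if n < Γ.length + 1 + Δ.length then 1 else 0 := by
        intro n
        rw [countFree_substAll M _ (Δ.length + 1) n hp₂ hbM]
        rw [Finset.sum_congr rfl (fun m hm => by rw [hMone m hm, one_mul])]
        rw [Finset.sum_range_succ']
        have e1 : ∀ m, (sArr Γ.length N (m + 1)).countFree n
            = if Γ.length + 1 + m = n then 1 else 0 := fun m => rfl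
        rw [Finset.sum_congr rfl (fun m _ => e1 m), sum_indicator, s0count]
        split_ifs <;> omega
      have hsz' := size_substAll M (sArr Γ.length N) (Δ.length + 1) hp₂ hbM
      have e1 : ∀ m, (sArr Γ.length N (m + 1)).size = 1 := fun m => rfl
      have e0 : (sArr Γ.length N 0).size = N.size + 2 := by
        show (LTm.var 0).size + N.shift.size + 1 = _
        simp only [LTm.shift, size_rename, LTm.size]
        omega
      have eA : (∑ m ∈ Finset.range (Δ.length + 1), M.countFree m) = Δ.length + 1 := by
        rw [Finset.sum_congr rfl hMone]
        simp
      have eB : (∑ m ∈ Finset.range (Δ.length + 1), M.countFree m * (sArr Γ.length N m).size)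
          = N.size + 2 + Δ.length := by
        rw [Finset.sum_congr rfl (fun m hm => by rw [hMone m hm, one_mul])]
        rw [Finset.sum_range_succ']
        rw [Finset.sum_congr rfl (fun m _ => e1 m), e0]
        simp
        omega
      rw [eA, eB] at hsz'
      have hszM' : (M.substAll (sArr Γ.length N)).size = M.size + N.size + 1 := by omega
      refine ⟨?_, ?_, ?_, ?_, ?_, ?_⟩
      · rw [arrLTm_eq]
        exact pure_substAll M _ hp₂ spure
      · rw [arrLTm_eq]
        exact (nrm_substAll M _ sneu).1 hn₂
      · rw [arrLTm_eq]
        exact linear_substAll M _ hp₂ hlin₂ spure slin sdisj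
      · intro i
        rw [arrLTm_eq, hcount2 i]
        simp only [List.length_cons, List.length_append]
        split_ifs <;> omega
      · rw [arrLTm_eq, hszM']
        simp only [List.map_cons, List.sum_cons, List.map_append, List.sum_append, LTy.size]
        simp only [List.map_cons, List.sum_cons] at hsz₂
        omega
      · show D₁.size + D₂.size + 1 = _
        rw [arrLTm_eq, hszM']
        simp only [List.map_cons, List.sum_cons, List.map_append, List.sum_append, LTy.qmCount]
        simp only [List.map_cons, List.sum_cons] at hds₂
        omega
  | @allR Γ M A hA D ih =>
      intro hcf hl
      have hl1 : (false = false) ∧ A.noForall false := hl.1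
      have hl' : LazyJudg (Γ.map LTy.shift) A := ⟨hl1.2, fun x hx => by
        obtain ⟨y, hy, rfl⟩ := List.mem_map.mp hx
        exact (LTy.noForall_rename y _ true).mpr (hl.2 y hy)⟩
      obtain ⟨hp, hn, hlin, hc, hsz, hds⟩ := ih hcf hl'
      have esz : ((Γ.map LTy.shift).map LTy.size).sum = (Γ.map LTy.size).sum := by
        have h : ∀ y ∈ Γ, (LTy.size ∘ LTy.shift) y = LTy.size y :=
          fun y _ => LTy.size_rename y Nat.succ
        rw [List.map_map, List.map_congr_left h]
      have eqm : ((Γ.map LTy.shift).map LTy.qmCount).sum = (Γ.map LTy.qmCount).sum := by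
        have h : ∀ y ∈ Γ, (LTy.qmCount ∘ LTy.shift) y = LTy.qmCount y :=
          fun y _ => LTy.qmCount_rename y Nat.succ
        rw [List.map_map, List.map_congr_left h]
      refine ⟨hp, hn, hlin, ?_, ?_, ?_⟩
      · intro i
        rw [hc i]
        simp only [List.length_map]
      · rw [esz] at hsz
        simp only [LTy.size]
        omega
      · show D.size + 1 = _
        rw [eqm] at hds
        simp only [LTy.qmCount]
        omega
  | @allL Γ M A τ B hB D ih =>
      intro _ hl
      exfalso
      have h := hl.2 _ List.mem_cons_self
      simp [LTy.noForall] at h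
  | @prom Γ M σ hok hΓ D ih =>
      intro hcf hl
      have hl' : LazyJudg Γ σ := ⟨hl.1, hl.2⟩
      obtain ⟨hp, hn, hlin, hc, hsz, hds⟩ := ih hcf hl'
      refine ⟨hp, hn, hlin, hc, ?_, ?_⟩
      · simp only [LTy.size]
        omega
      · show D.size + 1 = _
        simp only [LTy.qmCount]
        omega
  | @der Γ M σ τ hok D ih =>
      intro _ hl
      have ht : σ.noForall true := hl.2 (LTy.bang σ) List.mem_cons_self
      exact absurd (LTy.closed_no_both σ hok.2.1 ht hok.2.2) (fun h => h)
  | @weak Γ M σ τ hok D ih =>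
      intro _ hl
      have ht : σ.noForall true := hl.2 (LTy.bang σ) List.mem_cons_self
      exact absurd (LTy.closed_no_both σ hok.2.1 ht hok.2.2) (fun h => h)
  | @contr Γ M V σ τ hok hV D₁ D₂ ih₁ ih₂ =>
      intro _ hl
      have ht : σ.noForall true := hl.2 (LTy.bang σ) List.mem_cons_self
      exact absurd (LTy.closed_no_both σ hok.2.1 ht hok.2.2) (fun h => h)

end LEMPaper
namespace LEMPaper

/-- Lemma 6.1.(1)-(3): if `D` is a cut-free and lazy derivation
of `x₁:σ₁,…,xₙ:σₙ ⊢ M : σ` in `LEM`, then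
(1) `M` is a linear λ-term (no `discard`/`copy`) in normal form;
(2) `|M| ≤ Σᵢ|σᵢ| + |σ|`;
(3) `|D| = |M| + k`, where `k` is the number of occurrences of `∀` and `♯` in
`σ₁,…,σₙ,σ`. -/
theorem cutFree_lazy_derivation_subject_properties
    {Γ : List LTy} {M : LTm} {σ : LTy} (D : Der Γ M σ)
    (hcf : D.cutFree) (hlazy : LazyJudg Γ σ) :
    (M.IsPure ∧ M.LinearTm ∧ ∀ N, ¬ Step M N) ∧
    M.size ≤ (Γ.map LTy.size).sum + σ.size ∧
    D.size = M.size + ((Γ.map LTy.qmCount).sum + σ.qmCount) := by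
  obtain ⟨hp, hn, hlin, _, hsz, hds⟩ := main_lemma D hcf hlazy
  exact ⟨⟨hp, hlin, fun N hs => nrm_not_step hs hn⟩, hsz, hds⟩

end LEMPaper
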